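/- Let N ≥ 2, let c_1,…,c_N be positive real numbers, let ν_1,…,ν_N be positive integers, and set q = 1/(∑_{i=1}^N ν_i^{-1}). Then for every complex s with Re s > 0: ∫_{ℝ^{N−1}} (∑_{i=1}^{N−1} c_i e^{−ν_i y_i} + c_N e^{ν_N (y_1+⋯+y_{N−1})})^{−s} dy = q·(ν_1⋯ν_N)^{−1}·(∏_{i=1}^N c_i^{q/ν_i})^{−s}·Γ(s)^{−1}·∏_{i=1}^N Γ(q s / ν_i), where Γ is the complex Gamma function. -/

import Mathlib

open Finset Real MeasureTheory Complex Matrix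

section aux

lemma key1 {a : ℂ} (ha : 0 < a.re) {c : ℝ} (hc : 0 < c) :
    Integrable (fun w : ℝ => Complex.exp (a * w - c * Real.exp w)) ∧
    ∫ w : ℝ, Complex.exp (a * w - c * Real.exp w) = (c : ℂ) ^ (-a) * Complex.Gamma a := by
  set f : ℝ → ℝ := fun w => c * Real.exp w with hf
  set g : ℝ → ℂ := fun u => (Real.exp (-u) : ℝ) * (u : ℂ) ^ (a - 1) with hg
  have himg : f '' Set.univ = Set.Ioi 0 := by
    rw [Set.image_univ]
    ext u
    simp only [Set.mem_range, Set.mem_Ioi]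
    constructor
    · rintro ⟨v, rfl⟩; exact mul_pos hc (Real.exp_pos v)
    · intro hu
      exact ⟨Real.log (u / c), by rw [hf]; simp only []; rw [Real.exp_log (by positivity)]; field_simp⟩
  have hderiv : ∀ x ∈ Set.univ, HasDerivWithinAt f (c * Real.exp x) Set.univ x := fun x _ =>
    ((Real.hasDerivAt_exp x).const_mul c).hasDerivWithinAt
  have hinj : Set.InjOn f Set.univ := by
    intro x _ y _ h
    have : Real.exp x = Real.exp y := mul_left_cancel₀ hc.ne' h
    exact Real.exp_injective this
  have hkey : ∀ w : ℝ, |c * Real.exp w| • g (f w) =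
      (c : ℂ) ^ a * Complex.exp (a * w - c * Real.exp w) := by
    intro w
    have h1 : (0:ℝ) < c * Real.exp w := mul_pos hc (Real.exp_pos w)
    have h2 : ((c * Real.exp w : ℝ) : ℂ) ^ a = (c : ℂ) ^ a * Complex.exp (a * w) := by
      rw [Complex.ofReal_mul, mul_cpow_ofReal_nonneg hc.le (Real.exp_pos w).le]
      congr 1
      rw [Complex.cpow_def_of_ne_zero (by exact_mod_cast (Real.exp_pos w).ne'),
        ← Complex.ofReal_log (Real.exp_pos w).le, Real.log_exp, mul_comm]
    have h3 : ((c * Real.exp w : ℝ) : ℂ) ^ (a - 1) =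
        (c : ℂ) ^ a * Complex.exp (a * w) / (c * Real.exp w : ℝ) := by
      rw [Complex.cpow_sub _ _ (by exact_mod_cast h1.ne'), Complex.cpow_one, h2]
    have h4 : ((c * Real.exp w : ℝ) : ℂ) ≠ 0 := by exact_mod_cast h1.ne'
    rw [abs_of_pos h1]
    simp only [hg, hf, real_smul]
    rw [show ((c * Real.exp w : ℝ):ℂ) * (((Real.exp (-(c * Real.exp w)) : ℝ):ℂ) *
        ((c * Real.exp w : ℝ):ℂ) ^ (a-1)) = ((Real.exp (-(c * Real.exp w)) : ℝ):ℂ) *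
        (((c * Real.exp w : ℝ):ℂ) ^ (1:ℂ) * ((c * Real.exp w : ℝ):ℂ) ^ (a-1)) by
      rw [Complex.cpow_one]; ring]
    rw [← Complex.cpow_add _ _ h4, add_sub_cancel, h2, Complex.ofReal_exp]
    push_cast
    rw [sub_eq_add_neg, Complex.exp_add]
    ring
  have hint : IntegrableOn g (Set.Ioi 0) := Complex.GammaIntegral_convergent ha
  have hIcongr := integrableOn_image_iff_integrableOn_abs_deriv_smul
    MeasurableSet.univ hderiv hinj g
  rw [himg] at hIcongr
  have hint2 : IntegrableOn (fun w => |c * Real.exp w| • g (f w)) Set.univ := hIcongr.mp hint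
  rw [MeasureTheory.integrableOn_univ] at hint2
  have hint3 : Integrable (fun w : ℝ => (c : ℂ) ^ a * Complex.exp (a * w - c * Real.exp w)) := by
    refine hint2.congr ?_
    exact Filter.Eventually.of_forall hkey
  have hca : (c : ℂ) ^ a ≠ 0 := by
    intro h0
    have := Complex.cpow_eq_zero_iff (c:ℂ) a |>.mp h0
    exact (by exact_mod_cast hc.ne' : (c:ℂ) ≠ 0) this.1
  constructor
  · have := hint3.const_mul ((c : ℂ) ^ a)⁻¹
    refine this.congr (Filter.Eventually.of_forall fun w => ?_)
    field_simp
  · have hval := integral_image_eq_integral_abs_deriv_smul MeasurableSet.univ hderiv hinj g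
    rw [himg] at hval
    have hGamma : ∫ u in Set.Ioi 0, g u = Complex.Gamma a := (Complex.Gamma_eq_integral ha).symm
    rw [hGamma] at hval
    rw [MeasureTheory.setIntegral_univ] at hval
    have : ∫ w : ℝ, |c * Real.exp w| • g (f w) =
        (c:ℂ)^a * ∫ w : ℝ, Complex.exp (a * w - c * Real.exp w) := by
      rw [← integral_const_mul]
      exact integral_congr_ae (Filter.Eventually.of_forall hkey)
    rw [this] at hval
    rw [Complex.cpow_neg]
    rw [eq_comm, inv_mul_eq_iff_eq_mul₀ hca, eq_comm, mul_comm]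
    rw [mul_comm]; exact hval.symm


noncomputable def blockM (n : ℕ) (d : Fin n → ℝ) (e : ℝ) :
    Matrix (Fin n ⊕ Fin 1) (Fin n ⊕ Fin 1) ℝ :=
  Matrix.fromBlocks (-(Matrix.diagonal d)) (Matrix.replicateCol (Fin 1) (fun _ => 1))
    (Matrix.replicateRow (Fin 1) (fun _ => e)) 1

noncomputable def matA (n : ℕ) (d : Fin n → ℝ) (e : ℝ) : Matrix (Fin (n+1)) (Fin (n+1)) ℝ :=
  Matrix.reindex finSumFinEquiv finSumFinEquiv (blockM n d e)

lemma detA (n : ℕ) (d : Fin n → ℝ) (hd : ∀ i, d i ≠ 0) (e : ℝ) :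
    (matA n d e).det = (-1)^n * (∏ i, d i) * (1 + e * ∑ i, (d i)⁻¹) := by
  rw [matA, Matrix.det_reindex_self, blockM, Matrix.det_fromBlocks_one₂₂]
  have h1 : -(Matrix.diagonal d) - Matrix.replicateCol (Fin 1) (fun _ => (1:ℝ) : Fin n → ℝ) * Matrix.replicateRow (Fin 1) (fun _ => e : Fin n → ℝ)
      = -(Matrix.diagonal d * (1 + Matrix.replicateCol (Fin 1) (fun i => (d i)⁻¹) * Matrix.replicateRow (Fin 1) (fun _ => e : Fin n → ℝ))) := by
    rw [Matrix.mul_add, mul_one, neg_add, ← Matrix.mul_assoc]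
    congr 2
    ext i j
    simp [Matrix.mul_apply, Matrix.diagonal, mul_comm, hd i]
  rw [h1, Matrix.det_neg, Matrix.det_mul, Matrix.det_diagonal]
  erw [Matrix.det_one_add_replicateCol_mul_replicateRow (ι := Fin 1) (fun i => (d i)⁻¹) (fun _ => e)]
  rw [Fintype.card_fin]
  simp [dotProduct, Finset.mul_sum]
  ring

lemma mulVecA_castSucc (n : ℕ) (d : Fin n → ℝ) (e : ℝ) (z : Fin (n+1) → ℝ) (i : Fin n) :
    ((matA n d e) *ᵥ z) i.castSucc = z (Fin.last n) - d i * z i.castSucc := by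
  rw [matA, Matrix.reindex_apply, Matrix.submatrix_mulVec_equiv]
  have h2 : (finSumFinEquiv.symm (i.castSucc : Fin (n+1))) = Sum.inl i := by
    rw [show (i.castSucc : Fin (n+1)) = Fin.castAdd 1 i from rfl, finSumFinEquiv_symm_apply_castAdd]
  simp only [Function.comp_apply, Equiv.symm_symm, h2, blockM, Matrix.fromBlocks_mulVec]
  simp [Matrix.mulVec, dotProduct, Matrix.diagonal, Matrix.neg_apply,
    Finset.sum_ite_eq, sub_eq_add_neg]
  rw [show Fin.natAdd n (0 : Fin 1) = Fin.last n from by ext; simp,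
    show Fin.castAdd 1 i = i.castSucc from rfl]
  ring


lemma mulVecA_last (n : ℕ) (d : Fin n → ℝ) (e : ℝ) (z : Fin (n+1) → ℝ) :
    ((matA n d e) *ᵥ z) (Fin.last n) = z (Fin.last n) + e * ∑ i : Fin n, z i.castSucc := by
  rw [matA, Matrix.reindex_apply, Matrix.submatrix_mulVec_equiv]
  have h2 : (finSumFinEquiv.symm (Fin.last n)) = Sum.inr 0 := by
    rw [show (Fin.last n) = Fin.natAdd n 0 from by ext; simp, finSumFinEquiv_symm_apply_natAdd]
  simp only [Function.comp_apply, Equiv.symm_symm, h2, blockM, Matrix.fromBlocks_mulVec]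
  simp [Matrix.mulVec, dotProduct, Finset.mul_sum]
  rw [show Fin.natAdd n (0 : Fin 1) = Fin.last n from by ext; simp]
  rw [add_comm]
  congr 1

end aux

set_option maxHeartbeats 2000000 in
theorem integral_inv_cpow_sum_exp (N : ℕ) (hN : 2 ≤ N) (c : Fin N → ℝ)
    (hc : ∀ i, 0 < c i) (ν : Fin N → ℕ) (hν : ∀ i, 0 < ν i)
    (q : ℝ) (hq : q = (∑ i, ((ν i : ℝ))⁻¹)⁻¹)
    (s : ℂ) (hs : 0 < s.re) :
    (∫ y : Fin (N - 1) → ℝ,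
      ((((∑ i : Fin (N - 1), c (Fin.castLE (Nat.sub_le N 1) i) *
            Real.exp (-(ν (Fin.castLE (Nat.sub_le N 1) i) : ℝ) * y i)) +
          c ⟨N - 1, by omega⟩ *
            Real.exp ((ν (⟨N - 1, by omega⟩ : Fin N) : ℝ) * ∑ i, y i)) : ℝ) : ℂ) ^ (-s))
    = (q : ℂ) * ((∏ i, (ν i : ℂ)))⁻¹ *
        ((((∏ i, (c i) ^ (q / (ν i : ℝ))) : ℝ) : ℂ)) ^ (-s) *
        (Complex.Gamma s)⁻¹ * ∏ i, Complex.Gamma ((q : ℂ) * s / (ν i : ℂ)) := by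
  obtain ⟨n, rfl⟩ : ∃ n, N = n + 1 := ⟨N - 1, by omega⟩
  have hn : 1 ≤ n := by omega
  set d : Fin n → ℝ := fun i => (ν i.castSucc : ℝ) with hd
  set e : ℝ := (ν (Fin.last n) : ℝ) with he
  have hd0 : ∀ i, 0 < d i := fun i => Nat.cast_pos.mpr (hν _)
  have he0 : 0 < e := Nat.cast_pos.mpr (hν _)
  have hν0 : ∀ i : Fin (n+1), (0:ℝ) < (ν i : ℝ) := fun i => by exact_mod_cast hν i
  have hS : 0 < ∑ i : Fin (n+1), ((ν i : ℝ))⁻¹ :=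
    Finset.sum_pos (fun i _ => inv_pos.mpr (hν0 i)) univ_nonempty
  have hq0 : 0 < q := by rw [hq]; exact inv_pos.mpr hS
  have hqS : (∑ i : Fin (n+1), ((ν i : ℝ))⁻¹) = q⁻¹ := by rw [hq, inv_inv]
  set a : Fin (n+1) → ℂ := fun i => ((q / (ν i : ℝ) : ℝ) : ℂ) * s with haa
  have ha : ∀ i, 0 < (a i).re := by
    intro i
    rw [haa]
    simp only [Complex.re_ofReal_mul]
    exact mul_pos (div_pos hq0 (hν0 i)) hs
  set f : (Fin n → ℝ) → ℝ := fun y =>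
    (∑ i : Fin n, c i.castSucc * Real.exp (-(d i) * y i)) +
      c (Fin.last n) * Real.exp (e * ∑ i, y i) with hff
  have hf0 : ∀ y, 0 < f y := by
    intro y
    apply add_pos_of_nonneg_of_pos
    · exact Finset.sum_nonneg fun i _ => le_of_lt (mul_pos (hc _) (Real.exp_pos _))
    · exact mul_pos (hc _) (Real.exp_pos _)
  set G : (Fin (n+1) → ℝ) → ℂ :=
    fun w => ∏ i, Complex.exp (a i * (w i) - (c i : ℂ) * ((Real.exp (w i) : ℝ) : ℂ)) with hG
  set A := matA n d e with hA
  have key := fun (i : Fin (n+1)) => key1 (ha i) (hc i)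
  have hGamma_ne : Complex.Gamma s ≠ 0 := Complex.Gamma_ne_zero_of_re_pos hs
  -- determinant facts
  have hd' : ∀ i, d i ≠ 0 := fun i => (hd0 i).ne'
  set P : ℝ := ∏ i : Fin (n+1), (ν i : ℝ) with hP
  have hP0 : 0 < P := Finset.prod_pos fun i _ => hν0 i
  have hdetval : A.det = (-1)^n * (∏ i, d i) * (e * q⁻¹) := by
    rw [hA, detA n d hd' e]
    congr 1
    have : (1:ℝ) + e * ∑ i, (d i)⁻¹ = e * q⁻¹ := by
      rw [← hqS, Fin.sum_univ_castSucc]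
      rw [mul_add, mul_inv_cancel₀ he0.ne']
      ring
    rw [this]
  have habsdet : |A.det| = P * q⁻¹ := by
    rw [hdetval, hP, Fin.prod_univ_castSucc]
    rw [_root_.abs_mul, _root_.abs_mul, _root_.abs_pow, _root_.abs_neg, _root_.abs_one, one_pow, one_mul]
    rw [abs_of_pos (Finset.prod_pos fun i _ => hd0 i), abs_of_pos (mul_pos he0 (inv_pos.mpr hq0))]
    ring
  have hdet0 : A.det ≠ 0 := by
    intro h0
    rw [h0, abs_zero] at habsdet
    exact absurd habsdet.symm (ne_of_gt (mul_pos hP0 (inv_pos.mpr hq0)))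
  -- pointwise identity
  have hGA : ∀ z : Fin (n+1) → ℝ, G (A *ᵥ z) =
      Complex.exp (s * (z (Fin.last n)) - ((f (fun j => z j.castSucc) : ℝ) : ℂ) *
        ((Real.exp (z (Fin.last n)) : ℝ) : ℂ)) := by
    intro z
    simp only [hG]
    rw [← Complex.exp_sum]
    congr 1
    rw [Finset.sum_sub_distrib]
    have hpart1 : ∑ i : Fin (n+1), a i * ((A *ᵥ z) i : ℝ) = s * (z (Fin.last n)) := by
      have hqS' : (∑ i : Fin n, (d i)⁻¹) + e⁻¹ = q⁻¹ := by
        rw [← hqS, Fin.sum_univ_castSucc]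
      have hreal : ∑ i : Fin (n+1), ((A *ᵥ z) i) * ((ν i : ℝ))⁻¹ = z (Fin.last n) * q⁻¹ := by
        rw [Fin.sum_univ_castSucc]
        have hterm : ∀ i : Fin n, ((A *ᵥ z) i.castSucc) * ((ν i.castSucc : ℝ))⁻¹
            = z (Fin.last n) * (d i)⁻¹ - z i.castSucc := by
          intro i
          rw [hA, mulVecA_castSucc, show ((ν i.castSucc : ℝ)) = d i from rfl]
          field_simp
          rw [sub_div, mul_div_cancel_left₀ _ (hd' i)]
        have hlast : ((A *ᵥ z) (Fin.last n)) * ((ν (Fin.last n) : ℝ))⁻¹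
            = z (Fin.last n) * e⁻¹ + ∑ i : Fin n, z i.castSucc := by
          rw [hA, mulVecA_last, show ((ν (Fin.last n) : ℝ)) = e from rfl]
          field_simp
        rw [Finset.sum_congr rfl fun i _ => hterm i, hlast, Finset.sum_sub_distrib,
          ← Finset.mul_sum, ← hqS', mul_add]
        ring
      calc ∑ i : Fin (n+1), a i * ((A *ᵥ z) i : ℝ)
          = ∑ i : Fin (n+1), ((q:ℂ) * s) * ((((A *ᵥ z) i) * ((ν i : ℝ))⁻¹ : ℝ) : ℂ) := by
            refine Finset.sum_congr rfl fun i _ => ?_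
            rw [haa]
            push_cast
            have hne : ((ν i : ℝ) : ℂ) ≠ 0 := by
              exact_mod_cast (hν0 i).ne'
            field_simp
        _ = ((q:ℂ) * s) * ((∑ i : Fin (n+1), ((A *ᵥ z) i) * ((ν i : ℝ))⁻¹ : ℝ) : ℂ) := by
            rw [← Finset.mul_sum]
            push_cast
            ring
        _ = s * (z (Fin.last n)) := by
            rw [hreal]
            push_cast
            have hne : (q : ℂ) ≠ 0 := by exact_mod_cast hq0.ne'
            field_simp
    have hpart2 : ∑ i : Fin (n+1), (c i : ℂ) * ((Real.exp ((A *ᵥ z) i) : ℝ) : ℂ)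
        = ((f (fun j => z j.castSucc) : ℝ) : ℂ) * ((Real.exp (z (Fin.last n)) : ℝ) : ℂ) := by
      have hr2 : ∑ i : Fin (n+1), c i * Real.exp ((A *ᵥ z) i)
          = f (fun j => z j.castSucc) * Real.exp (z (Fin.last n)) := by
        rw [Fin.sum_univ_castSucc, hff, add_mul, Finset.sum_mul]
        congr 1
        · refine Finset.sum_congr rfl fun i _ => ?_
          rw [hA, mulVecA_castSucc,
            show z (Fin.last n) - d i * z i.castSucc = -(d i) * z i.castSucc + z (Fin.last n) by ring,
            Real.exp_add]
          ring
        · rw [hA, mulVecA_last,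
            show z (Fin.last n) + e * ∑ i : Fin n, z i.castSucc
              = e * ∑ i : Fin n, z i.castSucc + z (Fin.last n) by ring,
            Real.exp_add]
          ring
      calc ∑ i : Fin (n+1), (c i : ℂ) * ((Real.exp ((A *ᵥ z) i) : ℝ) : ℂ)
          = ((∑ i : Fin (n+1), c i * Real.exp ((A *ᵥ z) i) : ℝ) : ℂ) := by push_cast; rfl
        _ = _ := by rw [hr2]; push_cast; rfl
    rw [hpart1, hpart2]
  -- continuity / measurability facts
  have hGcont : Continuous G := by
    rw [hG]
    refine continuous_finset_prod _ fun i _ => ?_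
    exact Complex.continuous_exp.comp <| by fun_prop
  have hGint : Integrable G := by
    rw [hG]
    exact Integrable.fintype_prod fun i => (key i).1
  -- change of variables
  have hmap : Measure.map (Matrix.toLin' A) volume
      = ENNReal.ofReal |A.det⁻¹| • volume := by
    have := Real.map_matrix_volume_pi_eq_smul_volume_pi hdet0
    simpa using this
  have hAlin : Continuous (Matrix.toLin' A) := LinearMap.continuous_of_finiteDimensional _
  have hCoV : ∫ z : Fin (n+1) → ℝ, G (A *ᵥ z) = (q * P⁻¹) • ∫ w : Fin (n+1) → ℝ, G w := by
    have h1 : ∫ z : Fin (n+1) → ℝ, G (A *ᵥ z)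
        = ∫ w, G w ∂(Measure.map (Matrix.toLin' A) volume) := by
      rw [integral_map hAlin.measurable.aemeasurable hGcont.aestronglyMeasurable]
      simp_rw [Matrix.toLin'_apply]
    rw [h1, hmap, integral_smul_measure]
    congr 1
    rw [ENNReal.toReal_ofReal (abs_nonneg _), abs_inv, habsdet]
    rw [mul_inv, inv_inv]
    ring
  have hzint : Integrable (fun z : Fin (n+1) → ℝ => G (A *ᵥ z)) := by
    have h2 : Integrable G (Measure.map (Matrix.toLin' A) volume) := by
      rw [hmap]
      exact hGint.smul_measure ENNReal.ofReal_ne_top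
    have h3 := (integrable_map_measure hGcont.aestronglyMeasurable
      hAlin.measurable.aemeasurable).mp h2
    refine h3.congr (Filter.Eventually.of_forall fun z => ?_)
    simp [Function.comp, Matrix.toLin'_apply]
  -- split off the last coordinate
  set eqv := MeasurableEquiv.piFinSuccAbove (fun _ : Fin (n+1) => ℝ) (Fin.last n) with heqv
  have hmp : MeasurePreserving eqv (volume : Measure (Fin (n+1) → ℝ))
      ((volume : Measure ℝ).prod (volume : Measure (Fin n → ℝ))) := by
    have h0 := MeasureTheory.measurePreserving_piFinSuccAbove
      (fun _ : Fin (n+1) => (volume : Measure ℝ)) (Fin.last n)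
    rw [show (Measure.pi fun _ : Fin (n+1) => (volume : Measure ℝ))
        = (volume : Measure (Fin (n+1) → ℝ)) from volume_pi.symm,
      show (Measure.pi fun _ : Fin n => (volume : Measure ℝ))
        = (volume : Measure (Fin n → ℝ)) from volume_pi.symm] at h0
    exact h0
  set F2 : ℝ × (Fin n → ℝ) → ℂ := fun p =>
    Complex.exp (s * (p.1 : ℝ) - ((f p.2 : ℝ) : ℂ) * ((Real.exp p.1 : ℝ) : ℂ)) with hF2
  have hcomp : ∀ z : Fin (n+1) → ℝ, F2 (eqv z) = G (A *ᵥ z) := by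
    intro z
    rw [hGA z, hF2, heqv]
    have hinit : (Fin.init z) = fun j : Fin n => z j.castSucc := funext fun j => rfl
    simp [MeasurableEquiv.piFinSuccAbove_apply, Fin.succAbove_last, hinit]
  have hF2int : Integrable F2 ((volume : Measure ℝ).prod (volume : Measure (Fin n → ℝ))) := by
    rw [← hmp.integrable_comp_emb eqv.measurableEmbedding]
    refine hzint.congr (Filter.Eventually.of_forall fun z => ?_)
    exact (hcomp z).symm
  have hswap : ∫ z : Fin (n+1) → ℝ, G (A *ᵥ z) = ∫ y : Fin n → ℝ, ∫ τ : ℝ, F2 (τ, y) := by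
    calc ∫ z : Fin (n+1) → ℝ, G (A *ᵥ z) = ∫ z : Fin (n+1) → ℝ, F2 (eqv z) := by
          exact integral_congr_ae (Filter.Eventually.of_forall fun z => (hcomp z).symm)
      _ = ∫ p : ℝ × (Fin n → ℝ), F2 p ∂((volume : Measure ℝ).prod volume) :=
          hmp.integral_comp' F2
      _ = ∫ τ : ℝ, ∫ y : Fin n → ℝ, F2 (τ, y) := integral_prod _ hF2int
      _ = ∫ y : Fin n → ℝ, ∫ τ : ℝ, F2 (τ, y) :=
          integral_integral_swap hF2int
  -- pointwise Mellin representation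
  have hpoint : ∀ y : Fin n → ℝ, ((f y : ℝ) : ℂ) ^ (-s)
      = (Complex.Gamma s)⁻¹ * ∫ τ : ℝ, F2 (τ, y) := by
    intro y
    have hk := (key1 hs (hf0 y)).2
    simp only [hF2]
    rw [hk, mul_comm (((f y : ℝ):ℂ)^(-s)) (Complex.Gamma s), ← mul_assoc,
      inv_mul_cancel₀ hGamma_ne, one_mul]
  -- evaluate the product integral
  have hprodint : ∫ w : Fin (n+1) → ℝ, G w
      = ∏ i, ((c i : ℂ) ^ (-(a i)) * Complex.Gamma (a i)) := by
    rw [hG]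
    rw [volume_pi, MeasureTheory.integral_fintype_prod_eq_prod (ι := Fin (n+1))
      (f := fun (i : Fin (n+1)) (w : ℝ) =>
        Complex.exp (a i * w - (c i : ℂ) * ((Real.exp w : ℝ) : ℂ)))]
    exact Finset.prod_congr rfl fun i _ => (key i).2
  -- the product of powers
  have hC0 : (0:ℝ) < ∏ i, (c i) ^ (q / (ν i : ℝ)) :=
    Finset.prod_pos fun i _ => Real.rpow_pos_of_pos (hc i) _
  have hprodc : ∏ i, (c i : ℂ) ^ (-(a i))
      = ((((∏ i, (c i) ^ (q / (ν i : ℝ))) : ℝ) : ℂ)) ^ (-s) := by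
    have h1 : ∀ i : Fin (n+1), (c i : ℂ) ^ (-(a i))
        = Complex.exp (-(a i) * ((Real.log (c i) : ℝ) : ℂ)) := by
      intro i
      rw [Complex.cpow_def_of_ne_zero (by exact_mod_cast (hc i).ne'),
        ← Complex.ofReal_log (hc i).le, mul_comm]
    have h2 : ((((∏ i, (c i) ^ (q / (ν i : ℝ))) : ℝ) : ℂ)) ^ (-s)
        = Complex.exp (-s * ((Real.log (∏ i, (c i) ^ (q / (ν i : ℝ))) : ℝ) : ℂ)) := by
      rw [Complex.cpow_def_of_ne_zero (by exact_mod_cast hC0.ne'),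
        ← Complex.ofReal_log hC0.le, mul_comm]
    rw [h2, Finset.prod_congr rfl fun i _ => h1 i, ← Complex.exp_sum]
    congr 1
    rw [Real.log_prod (fun i _ => (Real.rpow_pos_of_pos (hc i) _).ne')]
    push_cast [Real.log_rpow (hc _)]
    rw [Finset.mul_sum]
    refine Finset.sum_congr rfl fun i _ => ?_
    simp only [haa]
    push_cast
    ring
  have hGa : ∀ i : Fin (n+1), Complex.Gamma (a i)
      = Complex.Gamma ((q : ℂ) * s / (ν i : ℂ)) := by
    intro i
    congr 1
    simp only [haa]
    push_cast
    ring
  -- put everything together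
  calc (∫ y : Fin n → ℝ, ((f y : ℝ) : ℂ) ^ (-s))
      = ∫ y : Fin n → ℝ, (Complex.Gamma s)⁻¹ * ∫ τ : ℝ, F2 (τ, y) :=
        integral_congr_ae (Filter.Eventually.of_forall fun y => hpoint y)
    _ = (Complex.Gamma s)⁻¹ * ∫ y : Fin n → ℝ, ∫ τ : ℝ, F2 (τ, y) :=
        MeasureTheory.integral_const_mul _ _
    _ = (Complex.Gamma s)⁻¹ * ∫ z : Fin (n+1) → ℝ, G (A *ᵥ z) := by rw [hswap]
    _ = (Complex.Gamma s)⁻¹ * ((q * P⁻¹) •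
          ∏ i, ((c i : ℂ) ^ (-(a i)) * Complex.Gamma (a i))) := by rw [hCoV, hprodint]
    _ = (q : ℂ) * ((∏ i, (ν i : ℂ)))⁻¹ *
        ((((∏ i, (c i) ^ (q / (ν i : ℝ))) : ℝ) : ℂ)) ^ (-s) *
        (Complex.Gamma s)⁻¹ * ∏ i, Complex.Gamma ((q : ℂ) * s / (ν i : ℂ)) := by
        rw [Finset.prod_mul_distrib, hprodc, Finset.prod_congr rfl fun i _ => hGa i,
          real_smul]
        push_cast [hP]
        ring
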